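/- For real constants m ≠ 0 and n ≠ 0, there do not exist linear real polynomials a(s) = n₂ s + n₃ and b(s) = n₄ s + n₅, not both zero, satisfying (a(s) b'(s) − a'(s) b(s)) / (a(s)² + b(s)²) = m n / (1 + n² + m² s²) for all s. -/

import Mathlib

/-- Nonexistence of linear polynomial solutions a(s) = n₂s + n₃, b(s) = n₄s + n₅, not both
zero, of the RRMF equation (a b' − a' b)/(a² + b²) = mn/(1 + n² + m²s²) for all s. -/
theorem stmt_12 (m n : ℝ) (hm : m ≠ 0) (hn : n ≠ 0) :
    ¬ ∃ n₂ n₃ n₄ n₅ : ℝ, (¬ (n₂ = 0 ∧ n₃ = 0 ∧ n₄ = 0 ∧ n₅ = 0)) ∧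
      ∀ s : ℝ, ((n₂ * s + n₃) * n₄ - n₂ * (n₄ * s + n₅)) /
          ((n₂ * s + n₃) ^ 2 + (n₄ * s + n₅) ^ 2) =
        m * n / (1 + n ^ 2 + m ^ 2 * s ^ 2) := by
  rintro ⟨n₂, n₃, n₄, n₅, hne, heq⟩
  have hmn : m * n ≠ 0 := mul_ne_zero hm hn
  have hD : ∀ s : ℝ, (n₂ * s + n₃) ^ 2 + (n₄ * s + n₅) ^ 2 ≠ 0 := by
    intro s h0
    have h := heq s
    rw [h0, div_zero] at h
    have hpos : (0:ℝ) < 1 + n ^ 2 + m ^ 2 * s ^ 2 := by positivity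
    have : m * n = 0 := by
      rcases div_eq_zero_iff.mp h.symm with h' | h'
      · exact h'
      · exact absurd h' hpos.ne'
    exact hmn this
  have key : ∀ s : ℝ, ((n₂ * s + n₃) * n₄ - n₂ * (n₄ * s + n₅)) * (1 + n ^ 2 + m ^ 2 * s ^ 2)
      = m * n * ((n₂ * s + n₃) ^ 2 + (n₄ * s + n₅) ^ 2) := by
    intro s
    have h := heq s
    have h2 := hD s
    have h3 : (1 + n ^ 2 + m ^ 2 * s ^ 2) ≠ 0 := by positivity
    rw [div_eq_div_iff h2 h3] at h
    linarith [h]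
  have e0 := key 0
  have e1 := key 1
  have e2 := key (-1)
  -- abbreviations
  set C := n₃ * n₄ - n₂ * n₅ with hC
  set A := n₂ ^ 2 + n₄ ^ 2 with hA
  set B := n₃ ^ 2 + n₅ ^ 2 with hB
  set P := n₂ * n₃ + n₄ * n₅ with hP
  have eB : C * (1 + n ^ 2) = m * n * B := by
    rw [hC, hB]; ring_nf; ring_nf at e0; linarith
  have eP : m * n * P = 0 := by
    rw [hP]; nlinarith [e1, e2]
  have eA : C * m ^ 2 = m * n * A := by
    rw [hC, hA]; nlinarith [e1, e2, e0]
  have hP0 : P = 0 := by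
    rcases mul_eq_zero.mp eP with h | h
    · exact absurd h hmn
    · exact h
  have hid : C ^ 2 + P ^ 2 = A * B := by rw [hC, hP, hA, hB]; ring
  have hmul : (C * m ^ 2) * (C * (1 + n ^ 2)) = (m * n * A) * (m * n * B) := by
    rw [eA, eB]
  rw [hP0] at hid
  have hC2 : C ^ 2 * m ^ 2 * (1 + n ^ 2) = m ^ 2 * n ^ 2 * C ^ 2 := by
    linear_combination hmul - m ^ 2 * n ^ 2 * hid
  have hCm : C ^ 2 * m ^ 2 = 0 := by linear_combination hC2
  have hC0 : C = 0 := by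
    rcases mul_eq_zero.mp hCm with h | h
    · exact pow_eq_zero_iff two_ne_zero |>.mp h
    · exact absurd (pow_eq_zero_iff two_ne_zero |>.mp h) hm
  have hA0 : A = 0 := by
    have : m * n * A = 0 := by rw [← eA, hC0]; ring
    rcases mul_eq_zero.mp this with h | h
    · exact absurd h hmn
    · exact h
  have hB0 : B = 0 := by
    have : m * n * B = 0 := by rw [← eB, hC0]; ring
    rcases mul_eq_zero.mp this with h | h
    · exact absurd h hmn
    · exact h
  apply hne
  rw [hA] at hA0
  rw [hB] at hB0
  obtain ⟨h2, h4⟩ := (add_eq_zero_iff_of_nonneg (sq_nonneg n₂) (sq_nonneg n₄)).mp hA0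
  obtain ⟨h3, h5⟩ := (add_eq_zero_iff_of_nonneg (sq_nonneg n₃) (sq_nonneg n₅)).mp hB0
  exact ⟨pow_eq_zero_iff two_ne_zero |>.mp h2, pow_eq_zero_iff two_ne_zero |>.mp h3,
    pow_eq_zero_iff two_ne_zero |>.mp h4, pow_eq_zero_iff two_ne_zero |>.mp h5⟩
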